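/- Let M be a countable coarse group satisfying the negative-expression axiom and such that the product of full filters is associative. Then F(M), with the product x·y, the inverse x⁻¹, the identity 1 = {C ∈ M : U ⊑ C for some *subgroup U}, and the topology generated by the sets Â, is a Polish group: it is a topological group whose topology is Polish. -/

import Mathlib

/-! Abstract coarse groups (Nies–Schlicht–Tent). -/

namespace CoarsePaper

/-- A structure with one ternary relation `rel A B C`, read "AB ⊑ C". -/
structure CG (M : Type) : Type where
  rel : M → M → M → Prop

variable {M : Type}

/-- `U` is a *subgroup: `UU ⊑ U`. -/
def IsSub (c : CG M) (U : M) : Prop := c.rel U U U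

/-- For *subgroups, `U ⊑ V` means `UV ⊑ V`. -/
def sle (c : CG M) (U V : M) : Prop := c.rel U V V

/-- `A ∈ LC(U)`: `U` is the ⊑-maximum *subgroup with `AU ⊑ A`. -/
def LC (c : CG M) (U A : M) : Prop :=
  IsSub c U ∧ c.rel A U A ∧ ∀ V, IsSub c V → c.rel A V A → sle c V U

/-- `A ∈ RC(U)`: `U` is the ⊑-maximum *subgroup with `UA ⊑ A`. -/
def RC (c : CG M) (U A : M) : Prop :=
  IsSub c U ∧ c.rel U A A ∧ ∀ V, IsSub c V → c.rel V A A → sle c V U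

/-- `A ⊑ B` for arbitrary elements: `AU ⊑ B` for some *subgroup `U` with `A ∈ LC(U)`. -/
def cle (c : CG M) (A B : M) : Prop := ∃ U, LC c U A ∧ c.rel A U B

/-- `A`, `B` are disjoint: there are no `C`, `D` with `CD ⊑ A` and `CD ⊑ B`. -/
def Disj (c : CG M) (A B : M) : Prop := ¬ ∃ C D, c.rel C D A ∧ c.rel C D B

/-- `S(A,B)`: there is a *subgroup `V` with `A ∈ RC(V)`, `B ∈ LC(V)`, `AB ⊑ V`;
we then write `B = A⋄`. -/
def Srel (c : CG M) (A B : M) : Prop :=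
  ∃ V, RC c V A ∧ LC c V B ∧ c.rel A B V

/-- The axioms of a coarse group. -/
structure Axioms (c : CG M) : Prop where
  -- (0a) ⊑ is a partial order on *subgroups in which any two elements have a meet
  sle_refl : ∀ U, IsSub c U → sle c U U
  sle_antisymm : ∀ U V, IsSub c U → IsSub c V → sle c U V → sle c V U → U = V
  sle_trans : ∀ U V W, IsSub c U → IsSub c V → IsSub c W → sle c U V → sle c V W → sle c U W
  meet : ∀ U V, IsSub c U → IsSub c V → ∃ W, IsSub c W ∧ sle c W U ∧ sle c W V ∧
    ∀ T, IsSub c T → sle c T U → sle c T V → sle c T W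
  -- (0b) every element is a left *coset and a right *coset of some *subgroup
  exists_lc : ∀ A, ∃ U, LC c U A
  exists_rc : ∀ A, ∃ U, RC c U A
  -- (0c) ⊑ is a partial order on M extending ⊑ on *subgroups
  cle_refl : ∀ A, cle c A A
  cle_antisymm : ∀ A B, cle c A B → cle c B A → A = B
  cle_trans : ∀ A B C, cle c A B → cle c B C → cle c A C
  cle_ext : ∀ U V, IsSub c U → IsSub c V → (cle c U V ↔ sle c U V)
  -- (1)
  lc_up : ∀ U' U A', IsSub c U' → IsSub c U → sle c U' U → LC c U' A' →
    ∃ A, LC c U A ∧ cle c A' A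
  lc_disj : ∀ U' U A' A, IsSub c U' → IsSub c U → sle c U' U → LC c U' A' → LC c U A →
    cle c A' A ∨ Disj c A' A
  rc_up : ∀ U' U A', IsSub c U' → IsSub c U → sle c U' U → RC c U' A' →
    ∃ A, RC c U A ∧ cle c A' A
  rc_disj : ∀ U' U A' A, IsSub c U' → IsSub c U → sle c U' U → RC c U' A' → RC c U A →
    cle c A' A ∨ Disj c A' A
  -- (2) monotonicity
  mono : ∀ A₀ A₁ B₀ B₁ C, c.rel B₀ B₁ C → cle c A₀ B₀ → cle c A₁ B₁ → c.rel A₀ A₁ C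
  -- (3)
  lc_sub_iff : ∀ U V B, IsSub c U → IsSub c V → LC c V B →
    (sle c U V ↔ ∃ A, LC c U A ∧ cle c A B)
  rc_sub_iff : ∀ U V B, IsSub c U → IsSub c V → RC c V B →
    (sle c U V ↔ ∃ A, RC c U A ∧ cle c A B)
  -- (4) inverses
  srel_existsUnique : ∀ A, ∃! B, Srel c A B
  srel_symm : ∀ A B, Srel c A B → Srel c B A
  srel_orderIso : ∀ A B A' B', Srel c A A' → Srel c B B' → (cle c A B ↔ cle c A' B')
  -- (5) products of compatible *cosets
  prod_exists : ∀ U V W A B, RC c U A → LC c V A → RC c V B → LC c W B →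
    ∃ C, RC c U C ∧ LC c W C ∧ c.rel A B C ∧ ∀ D, c.rel A B D → cle c C D

/-- A full filter on `M`. -/
structure FullFilter (c : CG M) (x : Set M) : Prop where
  up : ∀ A ∈ x, ∀ B, cle c A B → B ∈ x
  directed : ∀ A ∈ x, ∀ B ∈ x, ∃ C ∈ x, cle c C A ∧ cle c C B
  lc_mem : ∀ U, IsSub c U → ∃ A ∈ x, LC c U A
  rc_mem : ∀ U, IsSub c U → ∃ A ∈ x, RC c U A

/-- The product of two filters: `x·y = {C : ∃ A ∈ x, B ∈ y, AB ⊑ C}`. -/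
def fprod (c : CG M) (x y : Set M) : Set M :=
  {C | ∃ A ∈ x, ∃ B ∈ y, c.rel A B C}

/-- The inverse of a filter: `x⁻¹ = {A⋄ : A ∈ x}`. -/
def finv (c : CG M) (x : Set M) : Set M :=
  {B | ∃ A ∈ x, Srel c A B}

/-- The identity filter: generated by the *subgroups. -/
def fone (c : CG M) : Set M := {C | ∃ U, IsSub c U ∧ cle c U C}

/-- The space `F(M)` of full filters on `M`. -/
abbrev FF (c : CG M) : Type := {x : Set M // FullFilter c x}

/-- The topology on `F(M)` generated by the sets `Â = {x : A ∈ x}`. -/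
def ffTop (c : CG M) : TopologicalSpace (FF c) :=
  TopologicalSpace.generateFrom {S | ∃ A : M, S = {x : FF c | A ∈ x.1}}

/-- `Â`, as a collection of subsets of `M`: the full filters containing `A`. -/
def hatS (c : CG M) (A : M) : Set (Set M) := {x | FullFilter c x ∧ A ∈ x}

/-- Associativity of the product of full filters. -/
def FAssoc (c : CG M) : Prop :=
  ∀ x y z : Set M, FullFilter c x → FullFilter c y → FullFilter c z →
    fprod c (fprod c x y) z = fprod c x (fprod c y z)

/-- The negative-expression axiom. -/
structure NegAx (c : CG M) : Prop where
  rel_iff : ∀ A B C, c.rel A B C ↔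
    ¬ ∃ D E F, cle c D A ∧ cle c E B ∧ c.rel D E F ∧ Disj c C F
  le_iff : ∀ A B, cle c A B ↔ ¬ ∃ C, cle c C A ∧ Disj c B C

/-- The action of a filter on a *coset: `x·A = B` iff `SA ⊑ B` for some `S ∈ x`. -/
def act (c : CG M) (x : Set M) (A B : M) : Prop := ∃ S ∈ x, c.rel S A B

/-- `𝒱 ⊆ F(M)` is a subgroup of the filter group `F(M)`. -/
def IsSubgroupFF (c : CG M) (V : Set (FF c)) : Prop :=
  (∀ z : FF c, z.1 = fone c → z ∈ V) ∧
  (∀ u ∈ V, ∀ v ∈ V, ∀ w : FF c, w.1 = fprod c u.1 v.1 → w ∈ V) ∧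
  (∀ u ∈ V, ∀ w : FF c, w.1 = finv c u.1 → w ∈ V)

/-- The union of double cosets `⋃_{i<n} V̂·Â_i`, as a collection of subsets of `M`
(the underlying sets of the full filters belonging to it). -/
def doubleUnion (c : CG M) (V : M) {n : ℕ} (A : Fin n → M) : Set (Set M) :=
  {z | ∃ i : Fin n, ∃ u v : Set M, FullFilter c u ∧ FullFilter c v ∧ V ∈ u ∧ A i ∈ v ∧
    z = fprod c u v}

/-- The coset-recognition axiom. -/
def CosetRec (c : CG M) : Prop :=
  ∀ V, IsSub c V → ∀ n : ℕ, 1 ≤ n → ∀ A : Fin n → M, (∀ i, LC c V (A i)) →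
    (fone c ∈ doubleUnion c V A ∧
     (∀ p ∈ doubleUnion c V A, ∀ q ∈ doubleUnion c V A, fprod c p q ∈ doubleUnion c V A) ∧
     (∀ p ∈ doubleUnion c V A, finv c p ∈ doubleUnion c V A)) →
    ∃ U, IsSub c U ∧ (∀ i, c.rel V (A i) U) ∧
      ∀ z : Set M, FullFilter c z → U ∈ z → z ∈ doubleUnion c V A

/-- Roelcke precompactness of the filter group `F(M)`: every open neighbourhood `𝒰` of the
identity satisfies `F(M) = 𝒰·F·𝒰` for some finite `F`. -/
def RoelckeFF (c : CG M) : Prop :=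
  ∀ U : Set (FF c), @IsOpen (FF c) (ffTop c) U → (∀ z : FF c, z.1 = fone c → z ∈ U) →
    ∃ F : Set (FF c), F.Finite ∧
      ∀ z : FF c, ∃ u ∈ U, ∃ f ∈ F, ∃ v ∈ U, z.1 = fprod c (fprod c u.1 f.1) v.1


/-! ### Basic lemmas -/

section Lemmas

variable {c : CG M}

theorem lc_unique (ax : Axioms c) {U V A : M} (h1 : LC c U A) (h2 : LC c V A) : U = V :=
  ax.sle_antisymm U V h1.1 h2.1 (h2.2.2 U h1.1 h1.2.1) (h1.2.2 V h2.1 h2.2.1)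

theorem rc_unique (ax : Axioms c) {U V A : M} (h1 : RC c U A) (h2 : RC c V A) : U = V :=
  ax.sle_antisymm U V h1.1 h2.1 (h2.2.2 U h1.1 h1.2.1) (h1.2.2 V h2.1 h2.2.1)

theorem cle_of_sle (ax : Axioms c) {U V : M} (hU : IsSub c U) (hV : IsSub c V)
    (h : sle c U V) : cle c U V := (ax.cle_ext U V hU hV).mpr h

theorem rel_of_cle (ax : Axioms c) {A B U : M} (h : cle c A B) (hU : LC c U A) :
    c.rel A U B := by
  obtain ⟨T, hT, hrel⟩ := h
  rwa [lc_unique ax hT hU] at hrel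

theorem rc_self (ax : Axioms c) {U : M} (hU : IsSub c U) : RC c U U := by
  obtain ⟨ρ, hρ⟩ := ax.exists_rc U
  have : ρ = U := ax.sle_antisymm ρ U hρ.1 hU hρ.2.1 (hρ.2.2 U hU hU)
  rwa [this] at hρ

theorem not_disj (ax : Axioms c) {A B E : M} (hEA : cle c E A) (hEB : cle c E B) :
    ¬ Disj c A B := by
  obtain ⟨U, hU, hrelA⟩ := hEA
  exact fun h => h ⟨E, U, hrelA, rel_of_cle ax hEB hU⟩

theorem disj_symm {A B : M} (h : Disj c A B) : Disj c B A :=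
  fun ⟨C, D, h1, h2⟩ => h ⟨C, D, h2, h1⟩

theorem lc_coset_eq (ax : Axioms c) {U A B : M} (h1 : LC c U A) (h2 : LC c U B)
    (h : cle c A B) : A = B := by
  have hnd : ¬ Disj c B A := fun hd => hd ⟨A, U, rel_of_cle ax h h1, h1.2.1⟩
  rcases ax.lc_disj U U B A h2.1 h1.1 (ax.sle_refl U h2.1) h2 h1 with hc | hd
  · exact ax.cle_antisymm A B h hc
  · exact absurd hd hnd

theorem rc_coset_eq (ax : Axioms c) {U A B : M} (h1 : RC c U A) (h2 : RC c U B)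
    (h : cle c A B) : A = B := by
  obtain ⟨T, hT, hrelB⟩ := h
  have hnd : ¬ Disj c B A := fun hd => hd ⟨A, T, hrelB, hT.2.1⟩
  rcases ax.rc_disj U U B A h2.1 h1.1 (ax.sle_refl U h2.1) h2 h1 with hc | hd
  · exact ax.cle_antisymm A B ⟨T, hT, hrelB⟩ hc
  · exact absurd hd hnd

theorem lc_self (ax : Axioms c) {U : M} (hU : IsSub c U) : LC c U U := by
  obtain ⟨lam, hlam⟩ := ax.exists_lc U
  obtain ⟨B, hB, _⟩ := ax.srel_existsUnique U
  obtain ⟨V₀, hV₀U, hV₀B, hrelUB⟩ := id hB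
  have hV0 : V₀ = U := rc_unique ax hV₀U (rc_self ax hU)
  rw [hV0] at hV₀B hrelUB
  obtain ⟨V₁, hV₁B, hV₁U, hrelBU⟩ := ax.srel_symm U B hB
  have hV1 : V₁ = lam := lc_unique ax hV₁U hlam
  rw [hV1] at hV₁B
  obtain ⟨C, hCrc, hClc, hrelUBC, hleast⟩ :=
    ax.prod_exists U lam U U B (rc_self ax hU) hlam hV₁B hV₀B
  have hCU : cle c C U := hleast U hrelUB
  have hrelUCU : c.rel U C U := ax.mono U C U U U hU (ax.cle_refl U) hCU
  have hCB : C = B := (ax.srel_existsUnique U).unique ⟨U, rc_self ax hU, hClc, hrelUCU⟩ hB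
  have : lam = U := rc_unique ax hV₁B (hCB ▸ hCrc)
  rwa [this] at hlam

theorem srel_self (ax : Axioms c) {U : M} (hU : IsSub c U) : Srel c U U :=
  ⟨U, rc_self ax hU, lc_self ax hU, hU⟩

theorem shrink (ax : Axioms c) (P Q : M) :
    ∃ P' Q' W, IsSub c W ∧ LC c W P' ∧ RC c W Q' ∧ cle c P' P ∧ cle c Q' Q := by
  obtain ⟨lP, hlP⟩ := ax.exists_lc P
  obtain ⟨rQ, hrQ⟩ := ax.exists_rc Q
  obtain ⟨W, hW, hW1, hW2, _⟩ := ax.meet lP rQ hlP.1 hrQ.1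
  obtain ⟨P', hP'1, hP'2⟩ := (ax.lc_sub_iff W lP P hW hlP.1 hlP).mp hW1
  obtain ⟨Q', hQ'1, hQ'2⟩ := (ax.rc_sub_iff W rQ Q hW hrQ.1 hrQ).mp hW2
  exact ⟨P', Q', W, hW, hP'1, hQ'1, hP'2, hQ'2⟩

theorem lower_of_not_disj (ax : Axioms c) {A B : M} (h : ¬ Disj c A B) :
    ∃ E, cle c E A ∧ cle c E B := by
  obtain ⟨P, Q, h1, h2⟩ := not_not.mp h
  obtain ⟨P', Q', W, hW, hP', hQ', hPP, hQQ⟩ := shrink ax P Q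
  obtain ⟨σ, hσ⟩ := ax.exists_rc P'
  obtain ⟨τ, hτ⟩ := ax.exists_lc Q'
  obtain ⟨G, _, _, _, hleast⟩ := ax.prod_exists σ W τ P' Q' hσ hP' hQ' hτ
  exact ⟨G, hleast A (ax.mono P' Q' P Q A h1 hPP hQQ),
    hleast B (ax.mono P' Q' P Q B h2 hPP hQQ)⟩

theorem disj_mono (ax : Axioms c) {A A' B : M} (h : cle c A A') (hd : Disj c A' B) :
    Disj c A B := by
  intro hex
  obtain ⟨E, hEA, hEB⟩ := lower_of_not_disj ax (fun hd' => hd' hex)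
  exact not_disj ax (ax.cle_trans E A A' hEA h) hEB hd

theorem rel_up (ax : Axioms c) (nax : NegAx c) {A B C C' : M} (h : c.rel A B C)
    (hle : cle c C C') : c.rel A B C' := by
  rw [nax.rel_iff]
  rintro ⟨D, E, F, hD, hE, hF, hdisj⟩
  exact (nax.rel_iff A B C).mp h ⟨D, E, F, hD, hE, hF, disj_mono ax hle hdisj⟩

theorem srel_total (ax : Axioms c) (A : M) : ∃ B, Srel c A B :=
  (ax.srel_existsUnique A).exists

/-- Negative membership: `A ∉ x` iff some element of `x` is disjoint from `A`. -/
theorem not_mem_iff_disj (ax : Axioms c) {x : Set M} (hx : FullFilter c x) (A : M) :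
    A ∉ x ↔ ∃ C ∈ x, Disj c A C := by
  constructor
  · intro hA
    obtain ⟨U, hU⟩ := ax.exists_lc A
    obtain ⟨B, hBx, hB⟩ := hx.lc_mem U hU.1
    refine ⟨B, hBx, ?_⟩
    by_contra hnd
    obtain ⟨E, hEA, hEB⟩ := lower_of_not_disj ax hnd
    have h1 : ¬ Disj c A B := not_disj ax hEA hEB
    have h2 : ¬ Disj c B A := fun hd => h1 (disj_symm hd)
    rcases ax.lc_disj U U A B hU.1 hB.1 (ax.sle_refl U hU.1) hU hB with hc | hd
    · rcases ax.lc_disj U U B A hB.1 hU.1 (ax.sle_refl U hU.1) hB hU with hc' | hd'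
      · exact hA (ax.cle_antisymm A B hc hc' ▸ hBx)
      · exact h2 hd'
    · exact h1 hd
  · rintro ⟨C, hCx, hd⟩ hAx
    obtain ⟨E, hEx, hEA, hEC⟩ := hx.directed A hAx C hCx
    exact not_disj ax hEA hEC hd

end Lemmas
/-! ### Filter lemmas -/

section Filters

variable {c : CG M}

/-- In a full filter, below any element and any subgroup `T` below its coset subgroup,
there is an element of the filter that is a left coset of `T`. -/
theorem fil_lc (ax : Axioms c) {x : Set M} (hx : FullFilter c x) {A₀ U T : M}
    (hA₀ : A₀ ∈ x) (hU : LC c U A₀) (hT : IsSub c T) (hTU : sle c T U) :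
    ∃ A ∈ x, cle c A A₀ ∧ LC c T A := by
  obtain ⟨A₅, hA₅x, hA₅⟩ := hx.lc_mem T hT
  obtain ⟨A₆, hA₆x, h₆0, h₆5⟩ := hx.directed A₀ hA₀ A₅ hA₅x
  obtain ⟨W₆, hW₆⟩ := ax.exists_lc A₆
  have hW₆T : sle c W₆ T := (ax.lc_sub_iff W₆ T A₅ hW₆.1 hT hA₅).mpr ⟨A₆, hW₆, h₆5⟩
  obtain ⟨A₇, hA₇, h₆7⟩ := ax.lc_up W₆ T A₆ hW₆.1 hT hW₆T hW₆
  have hA₇x : A₇ ∈ x := hx.up A₆ hA₆x A₇ h₆7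
  rcases ax.lc_disj T U A₇ A₀ hT hU.1 hTU hA₇ hU with hc | hd
  · exact ⟨A₇, hA₇x, hc, hA₇⟩
  · exact absurd hd (not_disj ax h₆7 h₆0)

theorem fil_rc (ax : Axioms c) {x : Set M} (hx : FullFilter c x) {A₀ U T : M}
    (hA₀ : A₀ ∈ x) (hU : RC c U A₀) (hT : IsSub c T) (hTU : sle c T U) :
    ∃ A ∈ x, cle c A A₀ ∧ RC c T A := by
  obtain ⟨A₅, hA₅x, hA₅⟩ := hx.rc_mem T hT
  obtain ⟨A₆, hA₆x, h₆0, h₆5⟩ := hx.directed A₀ hA₀ A₅ hA₅x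
  obtain ⟨W₆, hW₆⟩ := ax.exists_rc A₆
  have hW₆T : sle c W₆ T := (ax.rc_sub_iff W₆ T A₅ hW₆.1 hT hA₅).mpr ⟨A₆, hW₆, h₆5⟩
  obtain ⟨A₇, hA₇, h₆7⟩ := ax.rc_up W₆ T A₆ hW₆.1 hT hW₆T hW₆
  have hA₇x : A₇ ∈ x := hx.up A₆ hA₆x A₇ h₆7
  rcases ax.rc_disj T U A₇ A₀ hT hU.1 hTU hA₇ hU with hc | hd
  · exact ⟨A₇, hA₇x, hc, hA₇⟩
  · exact absurd hd (not_disj ax h₆7 h₆0)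

theorem full_fone (ax : Axioms c) : FullFilter c (fone c) where
  up := fun A hA B hAB => by
    obtain ⟨U, hU, hUA⟩ := hA
    exact ⟨U, hU, ax.cle_trans U A B hUA hAB⟩
  directed := fun A hA B hB => by
    obtain ⟨U, hU, hUA⟩ := hA
    obtain ⟨V, hV, hVB⟩ := hB
    obtain ⟨W, hW, h1, h2, _⟩ := ax.meet U V hU hV
    exact ⟨W, ⟨W, hW, ax.cle_refl W⟩,
      ax.cle_trans W U A (cle_of_sle ax hW hU h1) hUA,
      ax.cle_trans W V B (cle_of_sle ax hW hV h2) hVB⟩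
  lc_mem := fun U hU => ⟨U, ⟨U, hU, ax.cle_refl U⟩, lc_self ax hU⟩
  rc_mem := fun U hU => ⟨U, ⟨U, hU, ax.cle_refl U⟩, rc_self ax hU⟩

theorem full_fprod (ax : Axioms c) (nax : NegAx c) {x y : Set M}
    (hx : FullFilter c x) (hy : FullFilter c y) : FullFilter c (fprod c x y) where
  up := fun C hC C' hCC' => by
    obtain ⟨A, hA, B, hB, hrel⟩ := hC
    exact ⟨A, hA, B, hB, rel_up ax nax hrel hCC'⟩
  directed := fun C hC C'' hC'' => by
    obtain ⟨A, hA, B, hB, hrel⟩ := hC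
    obtain ⟨A', hA', B', hB', hrel'⟩ := hC''
    obtain ⟨A₀, hA₀x, hA₀A, hA₀A'⟩ := hx.directed A hA A' hA'
    obtain ⟨B₀, hB₀y, hB₀B, hB₀B'⟩ := hy.directed B hB B' hB'
    obtain ⟨lA, hlA⟩ := ax.exists_lc A₀
    obtain ⟨rB, hrB⟩ := ax.exists_rc B₀
    obtain ⟨W, hW, hW1, hW2, _⟩ := ax.meet lA rB hlA.1 hrB.1
    obtain ⟨A₁, hA₁x, hA₁A₀, hA₁⟩ := fil_lc ax hx hA₀x hlA hW hW1
    obtain ⟨B₁, hB₁y, hB₁B₀, hB₁⟩ := fil_rc ax hy hB₀y hrB hW hW2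
    obtain ⟨σ, hσ⟩ := ax.exists_rc A₁
    obtain ⟨τ, hτ⟩ := ax.exists_lc B₁
    obtain ⟨E, _, _, hrelE, hleast⟩ := ax.prod_exists σ W τ A₁ B₁ hσ hA₁ hB₁ hτ
    have e1 : c.rel A₁ B₁ C := ax.mono A₁ B₁ A B C hrel
      (ax.cle_trans A₁ A₀ A hA₁A₀ hA₀A) (ax.cle_trans B₁ B₀ B hB₁B₀ hB₀B)
    have e2 : c.rel A₁ B₁ C'' := ax.mono A₁ B₁ A' B' C'' hrel'
      (ax.cle_trans A₁ A₀ A' hA₁A₀ hA₀A') (ax.cle_trans B₁ B₀ B' hB₁B₀ hB₀B')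
    exact ⟨E, ⟨A₁, hA₁x, B₁, hB₁y, hrelE⟩, hleast C e1, hleast C'' e2⟩
  lc_mem := fun U hU => by
    obtain ⟨B₀, hB₀y, hB₀⟩ := hy.lc_mem U hU
    obtain ⟨A₀, hA₀x, _⟩ := hx.lc_mem U hU
    obtain ⟨lA, hlA⟩ := ax.exists_lc A₀
    obtain ⟨rB, hrB⟩ := ax.exists_rc B₀
    obtain ⟨W, hW, hW1, hW2, _⟩ := ax.meet lA rB hlA.1 hrB.1
    obtain ⟨A₁, hA₁x, _, hA₁⟩ := fil_lc ax hx hA₀x hlA hW hW1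
    obtain ⟨B₁, hB₁y, hB₁B₀, hB₁⟩ := fil_rc ax hy hB₀y hrB hW hW2
    obtain ⟨lB₁, hlB₁⟩ := ax.exists_lc B₁
    obtain ⟨σ, hσ⟩ := ax.exists_rc A₁
    obtain ⟨C, _, hClc, hrelC, _⟩ := ax.prod_exists σ W lB₁ A₁ B₁ hσ hA₁ hB₁ hlB₁
    have hsub : sle c lB₁ U := (ax.lc_sub_iff lB₁ U B₀ hlB₁.1 hU hB₀).mpr ⟨B₁, hlB₁, hB₁B₀⟩
    obtain ⟨C', hC', hCC'⟩ := ax.lc_up lB₁ U C hlB₁.1 hU hsub hClc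
    exact ⟨C', ⟨A₁, hA₁x, B₁, hB₁y, rel_up ax nax hrelC hCC'⟩, hC'⟩
  rc_mem := fun U hU => by
    obtain ⟨A₀, hA₀x, hA₀⟩ := hx.rc_mem U hU
    obtain ⟨B₀, hB₀y, _⟩ := hy.rc_mem U hU
    obtain ⟨lA, hlA⟩ := ax.exists_lc A₀
    obtain ⟨rB, hrB⟩ := ax.exists_rc B₀
    obtain ⟨W, hW, hW1, hW2, _⟩ := ax.meet lA rB hlA.1 hrB.1
    obtain ⟨A₁, hA₁x, hA₁A₀, hA₁⟩ := fil_lc ax hx hA₀x hlA hW hW1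
    obtain ⟨B₁, hB₁y, _, hB₁⟩ := fil_rc ax hy hB₀y hrB hW hW2
    obtain ⟨lB₁, hlB₁⟩ := ax.exists_lc B₁
    obtain ⟨σ, hσ⟩ := ax.exists_rc A₁
    obtain ⟨C, hCrc, _, hrelC, _⟩ := ax.prod_exists σ W lB₁ A₁ B₁ hσ hA₁ hB₁ hlB₁
    have hsub : sle c σ U := (ax.rc_sub_iff σ U A₀ hσ.1 hU hA₀).mpr ⟨A₁, hσ, hA₁A₀⟩
    obtain ⟨C', hC', hCC'⟩ := ax.rc_up σ U C hσ.1 hU hsub hCrc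
    exact ⟨C', ⟨A₁, hA₁x, B₁, hB₁y, rel_up ax nax hrelC hCC'⟩, hC'⟩

theorem full_finv (ax : Axioms c) {x : Set M} (hx : FullFilter c x) :
    FullFilter c (finv c x) where
  up := fun B hB B' hBB' => by
    obtain ⟨A, hA, hS⟩ := hB
    obtain ⟨C, hC, _⟩ := ax.srel_existsUnique B'
    have hCB' : Srel c C B' := ax.srel_symm B' C hC
    exact ⟨C, hx.up A hA C ((ax.srel_orderIso A C B B' hS hCB').mpr hBB'), hCB'⟩
  directed := fun B hB B' hB' => by
    obtain ⟨A, hA, hS⟩ := hB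
    obtain ⟨A', hA', hS'⟩ := hB'
    obtain ⟨A₀, hA₀, h1, h2⟩ := hx.directed A hA A' hA'
    obtain ⟨B₀, hB₀, _⟩ := ax.srel_existsUnique A₀
    exact ⟨B₀, ⟨A₀, hA₀, hB₀⟩, (ax.srel_orderIso A₀ A B₀ B hB₀ hS).mp h1,
      (ax.srel_orderIso A₀ A' B₀ B' hB₀ hS').mp h2⟩
  lc_mem := fun U hU => by
    obtain ⟨A, hAx, hArc⟩ := hx.rc_mem U hU
    obtain ⟨B, hS, _⟩ := ax.srel_existsUnique A
    obtain ⟨V, hV1, hV2, _⟩ := id hS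
    exact ⟨B, ⟨A, hAx, hS⟩, rc_unique ax hV1 hArc ▸ hV2⟩
  rc_mem := fun U hU => by
    obtain ⟨A, hAx, hAlc⟩ := hx.lc_mem U hU
    obtain ⟨B, hS, _⟩ := ax.srel_existsUnique A
    obtain ⟨V, hV1, hV2, _⟩ := ax.srel_symm A B hS
    exact ⟨B, ⟨A, hAx, hS⟩, lc_unique ax hV2 hAlc ▸ hV1⟩

theorem fone_fprod (ax : Axioms c) {x : Set M} (hx : FullFilter c x) :
    fprod c (fone c) x = x := by
  ext C
  constructor
  · rintro ⟨A, ⟨U, hU, hUA⟩, B, hB, hrel⟩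
    have h1 : c.rel U B C := ax.mono U B A B C hrel hUA (ax.cle_refl B)
    obtain ⟨rB, hrB⟩ := ax.exists_rc B
    obtain ⟨W, hW, hWU, hWrB, _⟩ := ax.meet U rB hU hrB.1
    obtain ⟨B₁, hB₁x, hB₁B, hB₁⟩ := fil_rc ax hx hB hrB hW hWrB
    have h2 : c.rel W B₁ C := ax.mono W B₁ U B C h1 (cle_of_sle ax hW hU hWU) hB₁B
    obtain ⟨lB₁, hlB₁⟩ := ax.exists_lc B₁
    obtain ⟨G, _, hGlc, _, hleast⟩ :=
      ax.prod_exists W W lB₁ W B₁ (rc_self ax hW) (lc_self ax hW) hB₁ hlB₁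
    have hGB₁ : G = B₁ := lc_coset_eq ax hGlc hlB₁ (hleast B₁ hB₁.2.1)
    exact hx.up B₁ hB₁x C (hGB₁ ▸ hleast C h2)
  · intro hC
    obtain ⟨rC, hrC⟩ := ax.exists_rc C
    exact ⟨rC, ⟨rC, hrC.1, ax.cle_refl rC⟩, C, hC, hrC.2.1⟩

theorem fprod_fone (ax : Axioms c) {x : Set M} (hx : FullFilter c x) :
    fprod c x (fone c) = x := by
  ext C
  constructor
  · rintro ⟨A, hA, B, ⟨U, hU, hUB⟩, hrel⟩
    have h1 : c.rel A U C := ax.mono A U A B C hrel (ax.cle_refl A) hUB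
    obtain ⟨lA, hlA⟩ := ax.exists_lc A
    obtain ⟨W, hW, hWlA, hWU, _⟩ := ax.meet lA U hlA.1 hU
    obtain ⟨A₁, hA₁x, hA₁A, hA₁⟩ := fil_lc ax hx hA hlA hW hWlA
    have h2 : c.rel A₁ W C := ax.mono A₁ W A U C h1 hA₁A (cle_of_sle ax hW hU hWU)
    obtain ⟨σ, hσ⟩ := ax.exists_rc A₁
    obtain ⟨G, hGrc, _, _, hleast⟩ :=
      ax.prod_exists σ W W A₁ W hσ hA₁ (rc_self ax hW) (lc_self ax hW)
    have hGA₁ : G = A₁ := rc_coset_eq ax hGrc hσ (hleast A₁ hA₁.2.1)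
    exact hx.up A₁ hA₁x C (hGA₁ ▸ hleast C h2)
  · intro hC
    obtain ⟨lC, hlC⟩ := ax.exists_lc C
    exact ⟨C, hC, lC, ⟨lC, hlC.1, ax.cle_refl lC⟩, hlC.2.1⟩

theorem finv_fprod (ax : Axioms c) (nax : NegAx c) {x : Set M} (hx : FullFilter c x) :
    fprod c (finv c x) x = fone c := by
  ext C
  constructor
  · rintro ⟨A', ⟨A, hA, hS⟩, B, hB, hrel⟩
    obtain ⟨D, hD, hDA, hDB⟩ := hx.directed A hA B hB
    obtain ⟨D', hSD, _⟩ := ax.srel_existsUnique D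
    have hD'A' : cle c D' A' := (ax.srel_orderIso D A D' A' hSD hS).mp hDA
    have h1 : c.rel D' D C := ax.mono D' D A' B C hrel hD'A' hDB
    obtain ⟨V, hVD, hVD', hrelDD'⟩ := id hSD
    obtain ⟨V', hV'D', hV'D, hrelD'D⟩ := ax.srel_symm D D' hSD
    obtain ⟨G, _, hGlc, _, hleast⟩ := ax.prod_exists V' V V' D' D hV'D' hVD' hVD hV'D
    have hGV' : G = V' := lc_coset_eq ax hGlc (lc_self ax hV'D'.1) (hleast V' hrelD'D)
    exact ⟨V', hV'D'.1, hGV' ▸ hleast C h1⟩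
  · rintro ⟨U, hU, hUC⟩
    obtain ⟨B, hBx, hBlc⟩ := hx.lc_mem U hU
    obtain ⟨B', hSB, _⟩ := ax.srel_existsUnique B
    obtain ⟨V', hV'B', hV'B, hrelB'B⟩ := ax.srel_symm B B' hSB
    have hVU : V' = U := lc_unique ax hV'B hBlc
    exact ⟨B', ⟨B, hBx, hSB⟩, B, hBx, rel_up ax nax (hVU ▸ hrelB'B) hUC⟩

theorem fprod_finv (ax : Axioms c) (nax : NegAx c) {x : Set M} (hx : FullFilter c x) :
    fprod c x (finv c x) = fone c := by
  ext C
  constructor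
  · rintro ⟨A, hA, B', ⟨B, hB, hSB⟩, hrel⟩
    obtain ⟨D, hD, hDA, hDB⟩ := hx.directed A hA B hB
    obtain ⟨D', hSD, _⟩ := ax.srel_existsUnique D
    have hD'B' : cle c D' B' := (ax.srel_orderIso D B D' B' hSD hSB).mp hDB
    have h1 : c.rel D D' C := ax.mono D D' A B' C hrel hDA hD'B'
    obtain ⟨V, hVD, hVD', hrelDD'⟩ := id hSD
    obtain ⟨V', hV'D', hV'D, _⟩ := ax.srel_symm D D' hSD
    obtain ⟨lD, hlD⟩ := ax.exists_lc D
    have hV'lD : V' = lD := lc_unique ax hV'D hlD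
    rw [hV'lD] at hV'D'
    obtain ⟨G, _, hGlc, _, hleast⟩ := ax.prod_exists V lD V D D' hVD hlD hV'D' hVD'
    have hGV : G = V := lc_coset_eq ax hGlc (lc_self ax hVD.1) (hleast V hrelDD')
    exact ⟨V, hVD.1, hGV ▸ hleast C h1⟩
  · rintro ⟨U, hU, hUC⟩
    obtain ⟨B, hBx, hBrc⟩ := hx.rc_mem U hU
    obtain ⟨B', hSB, _⟩ := ax.srel_existsUnique B
    obtain ⟨V, hVB, hVB', hrelBB'⟩ := id hSB
    have hVU : V = U := rc_unique ax hVB hBrc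
    exact ⟨B, hBx, B', ⟨B, hBx, hSB⟩, rel_up ax nax (hVU ▸ hrelBB') hUC⟩

end Filters
/-! ### Topology on `F(M)` -/

section Topology

open TopologicalSpace Topology

attribute [local instance] Classical.propDecidable

variable {c : CG M}

/-- The basic open set `Â`. -/
def hat (c : CG M) (A : M) : Set (FF c) := {x : FF c | A ∈ x.1}

theorem isOpen_hat (c : CG M) (A : M) : IsOpen[ffTop c] (hat c A) :=
  TopologicalSpace.GenerateOpen.basic _ ⟨A, rfl⟩

theorem isOpen_hat_compl (ax : Axioms c) (A : M) : IsOpen[ffTop c] (hat c A)ᶜ := by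
  letI := ffTop c
  have h : (hat c A)ᶜ = ⋃ C, ⋃ _ : Disj c A C, hat c C := by
    ext x
    simp only [Set.mem_compl_iff, hat, Set.mem_setOf_eq, Set.mem_iUnion]
    constructor
    · intro hA
      obtain ⟨C, hCx, hd⟩ := (not_mem_iff_disj ax x.2 A).mp hA
      exact ⟨C, hd, hCx⟩
    · rintro ⟨C, hd, hCx⟩
      exact (not_mem_iff_disj ax x.2 A).mpr ⟨C, hCx, hd⟩
  rw [h]
  exact isOpen_iUnion fun C => isOpen_iUnion fun _ => isOpen_hat c C

/-- Coded witness: some `C` with code `n` lies in `x` and satisfies `q`. -/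
def WS (enc : M → ℕ) (q : M → Prop) (n : ℕ) (x : Set M) : Prop :=
  ∃ C, enc C = n ∧ C ∈ x ∧ q C

theorem ws_cases {enc : M → ℕ} (henc : Function.Injective enc) (q : M → Prop) (n : ℕ) :
    (∃ C, enc C = n ∧ q C ∧ ∀ x : Set M, (WS enc q n x ↔ C ∈ x)) ∨
      (∀ x : Set M, ¬ WS enc q n x) := by
  by_cases h : ∃ C, enc C = n ∧ q C
  · obtain ⟨C, hCn, hq⟩ := h
    refine Or.inl ⟨C, hCn, hq, fun x => ⟨?_, fun hx => ⟨C, hCn, hx, hq⟩⟩⟩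
    rintro ⟨C', hC'n, hC'x, _⟩
    rwa [henc (hC'n.trans hCn.symm)] at hC'x
  · refine Or.inr fun x ⟨C, hCn, _, hq⟩ => h ⟨C, hCn, hq⟩

theorem isOpen_ws {enc : M → ℕ} (henc : Function.Injective enc) (q : M → Prop) (n : ℕ) :
    IsOpen[ffTop c] {x : FF c | WS enc q n x.1} := by
  letI := ffTop c
  rcases ws_cases henc q n with ⟨C, _, _, hiff⟩ | hno
  · have : {x : FF c | WS enc q n x.1} = hat c C := by
      ext x; exact hiff x.1
    rw [this]; exact isOpen_hat c C
  · have : {x : FF c | WS enc q n x.1} = ∅ := by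
      ext x; simp only [Set.mem_setOf_eq, Set.mem_empty_iff_false, iff_false]; exact hno x.1
    rw [this]; exact isOpen_empty

theorem isOpen_ws_compl (ax : Axioms c) {enc : M → ℕ} (henc : Function.Injective enc)
    (q : M → Prop) (n : ℕ) : IsOpen[ffTop c] {x : FF c | WS enc q n x.1}ᶜ := by
  letI := ffTop c
  rcases ws_cases henc q n with ⟨C, _, _, hiff⟩ | hno
  · have : {x : FF c | WS enc q n x.1} = hat c C := by
      ext x; exact hiff x.1
    rw [this]; exact isOpen_hat_compl ax C
  · have : {x : FF c | WS enc q n x.1} = ∅ := by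
      ext x; simp only [Set.mem_setOf_eq, Set.mem_empty_iff_false, iff_false]; exact hno x.1
    rw [this]; simp only [Set.compl_empty]; exact isOpen_univ

/-- Least code of a witness (or `0`). -/
noncomputable def wfind (enc : M → ℕ) (q : M → Prop) (x : Set M) : ℕ :=
  if h : ∃ n, WS enc q n x then Nat.find h else 0

/-- The conditions characterising `wfind` relative to a "gate" proposition. -/
def WCond (enc : M → ℕ) (q : M → Prop) (gate : Prop) (x : Set M) (n : ℕ) : Prop :=
  (gate → WS enc q n x ∧ ∀ m < n, ¬ WS enc q m x) ∧ (¬ gate → n = 0)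

theorem wfind_wcond {enc : M → ℕ} {q : M → Prop} {gate : Prop} {x : Set M}
    (h : gate ↔ ∃ n, WS enc q n x) : WCond enc q gate x (wfind enc q x) := by
  unfold wfind
  by_cases hg : gate
  · rw [dif_pos (h.mp hg)]
    exact ⟨fun _ => ⟨Nat.find_spec (h.mp hg), fun m hm => Nat.find_min (h.mp hg) hm⟩,
      fun hng => absurd hg hng⟩
  · rw [dif_neg (fun hex => hg (h.mpr hex))]
    exact ⟨fun hg' => absurd hg' hg, fun _ => rfl⟩

theorem wcond_unique {enc : M → ℕ} {q : M → Prop} {gate : Prop} {x : Set M} {n : ℕ}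
    (h : gate ↔ ∃ n, WS enc q n x) (hc : WCond enc q gate x n) : wfind enc q x = n := by
  unfold wfind
  by_cases hg : gate
  · rw [dif_pos (h.mp hg)]
    obtain ⟨h1, h2⟩ := hc.1 hg
    exact (Nat.find_eq_iff (h.mp hg)).mpr ⟨h1, fun m hm => h2 m hm⟩
  · rw [dif_neg (fun hex => hg (h.mpr hex)), hc.2 hg]

theorem isOpen_wfind (ax : Axioms c) {enc : M → ℕ} (henc : Function.Injective enc)
    (q : M → Prop) {gateSet : Set (FF c)}
    (hgate : ∀ x : FF c, x ∈ gateSet ↔ ∃ n, WS enc q n x.1)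
    (hopen : IsOpen[ffTop c] gateSet) (hopenc : IsOpen[ffTop c] gateSetᶜ) (n : ℕ) :
    IsOpen[ffTop c] {x : FF c | wfind enc q x.1 = n} := by
  letI := ffTop c
  have heq : {x : FF c | wfind enc q x.1 = n} =
      (gateSet ∩ {x : FF c | WS enc q n x.1} ∩
        ⋂ m ∈ Finset.range n, {x : FF c | WS enc q m x.1}ᶜ) ∪
      (gateSetᶜ ∩ {_x : FF c | n = 0}) := by
    ext x
    simp only [Set.mem_setOf_eq, Set.mem_union, Set.mem_inter_iff, Set.mem_iInter,
      Set.mem_compl_iff, Finset.mem_range]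
    by_cases hg : x ∈ gateSet
    · obtain ⟨hex⟩ : Nonempty (∃ m, WS enc q m x.1) := ⟨(hgate x).mp hg⟩
      unfold wfind
      rw [dif_pos hex]
      constructor
      · intro hf
        exact Or.inl ⟨⟨hg, hf ▸ Nat.find_spec hex⟩, fun m hm => Nat.find_min hex (hf ▸ hm)⟩
      · rintro (⟨⟨_, h1⟩, h2⟩ | ⟨hng, _⟩)
        · exact (Nat.find_eq_iff hex).mpr ⟨h1, fun m hm => h2 m hm⟩
        · exact absurd hg hng
    · have hnex : ¬ ∃ m, WS enc q m x.1 := fun hex => hg ((hgate x).mpr hex)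
      unfold wfind
      rw [dif_neg hnex]
      constructor
      · intro hf
        exact Or.inr ⟨hg, hf.symm⟩
      · rintro (⟨⟨hg', _⟩, _⟩ | ⟨_, hn⟩)
        · exact absurd hg' hg
        · exact hn.symm
  rw [heq]
  refine IsOpen.union (IsOpen.inter (hopen.inter (isOpen_ws henc q n)) ?_)
    (hopenc.inter ?_)
  · exact isOpen_biInter_finset fun m _ => isOpen_ws_compl ax henc q m
  · by_cases hn : n = 0
    · have : {_x : FF c | n = 0} = Set.univ := by
        ext; simp [hn]
      rw [this]; exact isOpen_univ
    · have : {_x : FF c | n = 0} = ∅ := by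
        ext; simp [hn]
      rw [this]; exact isOpen_empty

end Topology
/-! ### Polishness -/

section Polish

open TopologicalSpace Topology

attribute [local instance] Classical.propDecidable

variable {c : CG M}

/-- The ambient Polish product space into which `F(M)` is embedded. -/
abbrev XS (M : Type) : Type := (M → Bool) × ((M × M → ℕ) × ((M → ℕ) × (M → ℕ)))

/-- The set of elements coded by a boolean function. -/
def memF (f : M → Bool) : Set M := {A | f A = true}

/-- The closed set of codes of full filters (together with minimal witness data). -/
def SSet (c : CG M) (enc : M → ℕ) : Set (XS M) :=
  {s | (∀ p : M × M, cle c p.1 p.2 → p.1 ∈ memF s.1 → p.2 ∈ memF s.1) ∧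
       (∀ p : M × M, WCond enc (fun C => cle c C p.1 ∧ cle c C p.2)
          (p.1 ∈ memF s.1 ∧ p.2 ∈ memF s.1) (memF s.1) (s.2.1 p)) ∧
       (∀ U, WCond enc (fun C => LC c U C) (IsSub c U) (memF s.1) (s.2.2.1 U)) ∧
       (∀ U, WCond enc (fun C => RC c U C) (IsSub c U) (memF s.1) (s.2.2.2 U))}

theorem isClopen_const {X : Type} [TopologicalSpace X] (p : Prop) :
    IsClopen {_x : X | p} := by
  by_cases h : p
  · simp only [h, Set.setOf_true]; exact isClopen_univ
  · simp only [h, Set.setOf_false]; exact isClopen_empty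

theorem isClopen_biInter_range {X : Type} [TopologicalSpace X] {n : ℕ} {f : ℕ → Set X}
    (h : ∀ i, IsClopen (f i)) : IsClopen (⋂ i ∈ Finset.range n, f i) :=
  ⟨isClosed_biInter fun i _ => (h i).isClosed, isOpen_biInter_finset fun i _ => (h i).isOpen⟩

theorem isClopen_memX (A : M) : IsClopen {s : XS M | s.1 A = true} :=
  (isClopen_discrete {true}).preimage ((continuous_apply A).comp continuous_fst)

theorem isClopen_wsX {enc : M → ℕ} (henc : Function.Injective enc) (q : M → Prop) (n : ℕ) :
    IsClopen {s : XS M | WS enc q n (memF s.1)} := by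
  rcases ws_cases henc q n with ⟨C, _, _, hiff⟩ | hno
  · have : {s : XS M | WS enc q n (memF s.1)} = {s : XS M | s.1 C = true} := by
      ext s; exact hiff (memF s.1)
    rw [this]; exact isClopen_memX C
  · have : {s : XS M | WS enc q n (memF s.1)} = ∅ := by
      ext s
      simp only [Set.mem_setOf_eq, Set.mem_empty_iff_false, iff_false]
      exact hno (memF s.1)
    rw [this]; exact isClopen_empty

theorem isClopen_wcondX {enc : M → ℕ} (henc : Function.Injective enc) (q : M → Prop)
    {gate : XS M → Prop} (hg : IsClopen {s : XS M | gate s}) (n : ℕ) :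
    IsClopen {s : XS M | WCond enc q (gate s) (memF s.1) n} := by
  have heq : {s : XS M | WCond enc q (gate s) (memF s.1) n} =
      ({s : XS M | gate s}ᶜ ∪ ({s : XS M | WS enc q n (memF s.1)} ∩
        ⋂ m ∈ Finset.range n, {s : XS M | WS enc q m (memF s.1)}ᶜ)) ∩
      ({s : XS M | gate s} ∪ {_s : XS M | n = 0}) := by
    ext s
    simp only [WCond, Set.mem_setOf_eq, Set.mem_inter_iff, Set.mem_union,
      Set.mem_compl_iff, Set.mem_iInter, Finset.mem_range]
    by_cases h : gate s <;> simp [h]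
  rw [heq]
  refine IsClopen.inter (IsClopen.union hg.compl (IsClopen.inter (isClopen_wsX henc q n)
    (isClopen_biInter_range fun m => (isClopen_wsX henc q m).compl)))
    (IsClopen.union hg (isClopen_const _))

theorem isClosed_wcond_fam {enc : M → ℕ} (henc : Function.Injective enc) (q : M → Prop)
    {gate : XS M → Prop} (hg : IsClopen {s : XS M | gate s}) {φ : XS M → ℕ}
    (hφ : Continuous φ) :
    IsClosed {s : XS M | WCond enc q (gate s) (memF s.1) (φ s)} := by
  rw [← isOpen_compl_iff]
  have heq : {s : XS M | WCond enc q (gate s) (memF s.1) (φ s)}ᶜ =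
      ⋃ n, φ ⁻¹' {n} ∩ {s : XS M | WCond enc q (gate s) (memF s.1) n}ᶜ := by
    ext s
    simp only [Set.mem_compl_iff, Set.mem_setOf_eq, Set.mem_iUnion, Set.mem_inter_iff,
      Set.mem_preimage, Set.mem_singleton_iff]
    constructor
    · intro h; exact ⟨φ s, rfl, h⟩
    · rintro ⟨n, rfl, h⟩; exact h
  rw [heq]
  exact isOpen_iUnion fun n => IsOpen.inter (hφ.isOpen_preimage _ (isOpen_discrete _))
    (isClopen_wcondX henc q hg n).compl.isOpen

theorem isClosed_SSet {enc : M → ℕ} (henc : Function.Injective enc) :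
    IsClosed (SSet c enc) := by
  have heq : SSet c enc =
      (⋂ p : M × M, {s : XS M | cle c p.1 p.2 → p.1 ∈ memF s.1 → p.2 ∈ memF s.1}) ∩
      ((⋂ p : M × M, {s : XS M | WCond enc (fun C => cle c C p.1 ∧ cle c C p.2)
          (p.1 ∈ memF s.1 ∧ p.2 ∈ memF s.1) (memF s.1) (s.2.1 p)}) ∩
       ((⋂ U : M, {s : XS M | WCond enc (fun C => LC c U C) (IsSub c U) (memF s.1)
          (s.2.2.1 U)}) ∩
        (⋂ U : M, {s : XS M | WCond enc (fun C => RC c U C) (IsSub c U) (memF s.1)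
          (s.2.2.2 U)}))) := by
    ext s
    simp only [SSet, Set.mem_setOf_eq, Set.mem_inter_iff, Set.mem_iInter]
  rw [heq]
  refine IsClosed.inter (isClosed_iInter fun p => ?_) (IsClosed.inter
    (isClosed_iInter fun p => ?_) (IsClosed.inter (isClosed_iInter fun U => ?_)
    (isClosed_iInter fun U => ?_)))
  · by_cases hle : cle c p.1 p.2
    · have : {s : XS M | cle c p.1 p.2 → p.1 ∈ memF s.1 → p.2 ∈ memF s.1} =
          {s : XS M | s.1 p.1 = true}ᶜ ∪ {s : XS M | s.1 p.2 = true} := by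
        ext s
        simp only [Set.mem_setOf_eq, Set.mem_union, Set.mem_compl_iff, memF, hle,
          true_implies]
        exact imp_iff_not_or
      rw [this]
      exact (IsClopen.union (isClopen_memX p.1).compl (isClopen_memX p.2)).isClosed
    · have : {s : XS M | cle c p.1 p.2 → p.1 ∈ memF s.1 → p.2 ∈ memF s.1} = Set.univ := by
        ext s; simp [hle]
      rw [this]; exact isClosed_univ
  · refine isClosed_wcond_fam henc _ ?_ ((continuous_apply p).comp
      (continuous_fst.comp continuous_snd))
    exact IsClopen.inter (isClopen_memX p.1) (isClopen_memX p.2)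
  · exact isClosed_wcond_fam henc _ (isClopen_const _) ((continuous_apply U).comp
      ((continuous_fst.comp continuous_snd).comp continuous_snd))
  · exact isClosed_wcond_fam henc _ (isClopen_const _) ((continuous_apply U).comp
      ((continuous_snd.comp continuous_snd).comp continuous_snd))

end Polish
section Polish2

open TopologicalSpace Topology

attribute [local instance] Classical.propDecidable

variable {c : CG M}

/-- The embedding of `F(M)` into `XS M`. -/
noncomputable def Phi (c : CG M) (enc : M → ℕ) (x : FF c) : XS M :=
  (fun A => decide (A ∈ x.1),
   fun p => wfind enc (fun C => cle c C p.1 ∧ cle c C p.2) x.1,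
   fun U => wfind enc (fun C => LC c U C) x.1,
   fun U => wfind enc (fun C => RC c U C) x.1)

theorem memF_Phi (enc : M → ℕ) (x : FF c) : memF (Phi c enc x).1 = x.1 := by
  ext A; simp [memF, Phi]

theorem gate_d (enc : M → ℕ) (x : FF c) (p : M × M) :
    (p.1 ∈ x.1 ∧ p.2 ∈ x.1) ↔ ∃ n, WS enc (fun C => cle c C p.1 ∧ cle c C p.2) n x.1 := by
  constructor
  · rintro ⟨h1, h2⟩
    obtain ⟨C, hC, hc1, hc2⟩ := x.2.directed p.1 h1 p.2 h2
    exact ⟨enc C, C, rfl, hC, hc1, hc2⟩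
  · rintro ⟨n, C, _, hCx, h1, h2⟩
    exact ⟨x.2.up C hCx p.1 h1, x.2.up C hCx p.2 h2⟩

theorem gate_l (enc : M → ℕ) (x : FF c) (U : M) :
    IsSub c U ↔ ∃ n, WS enc (fun C => LC c U C) n x.1 := by
  constructor
  · intro hU
    obtain ⟨A, hAx, hA⟩ := x.2.lc_mem U hU
    exact ⟨enc A, A, rfl, hAx, hA⟩
  · rintro ⟨n, C, _, _, hLC⟩
    exact hLC.1

theorem gate_r (enc : M → ℕ) (x : FF c) (U : M) :
    IsSub c U ↔ ∃ n, WS enc (fun C => RC c U C) n x.1 := by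
  constructor
  · intro hU
    obtain ⟨A, hAx, hA⟩ := x.2.rc_mem U hU
    exact ⟨enc A, A, rfl, hAx, hA⟩
  · rintro ⟨n, C, _, _, hRC⟩
    exact hRC.1

theorem Phi_mem (enc : M → ℕ) (x : FF c) : Phi c enc x ∈ SSet c enc := by
  refine ⟨?_, fun p => ?_, fun U => ?_, fun U => ?_⟩
  · intro p hle hA
    rw [memF_Phi] at *
    exact x.2.up p.1 hA p.2 hle
  · rw [memF_Phi]
    exact wfind_wcond (gate_d enc x p)
  · rw [memF_Phi]
    exact wfind_wcond (gate_l enc x U)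
  · rw [memF_Phi]
    exact wfind_wcond (gate_r enc x U)

theorem full_memF {enc : M → ℕ} {s : XS M} (hs : s ∈ SSet c enc) :
    FullFilter c (memF s.1) where
  up := fun A hA B hAB => hs.1 (A, B) hAB hA
  directed := fun A hA B hB => by
    obtain ⟨C, _, hCx, h1, h2⟩ := ((hs.2.1 (A, B)).1 ⟨hA, hB⟩).1
    exact ⟨C, hCx, h1, h2⟩
  lc_mem := fun U hU => by
    obtain ⟨C, _, hCx, hLC⟩ := ((hs.2.2.1 U).1 hU).1
    exact ⟨C, hCx, hLC⟩
  rc_mem := fun U hU => by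
    obtain ⟨C, _, hCx, hRC⟩ := ((hs.2.2.2 U).1 hU).1
    exact ⟨C, hCx, hRC⟩

/-- `F(M)` is homeomorphic to the closed set `SSet c enc`. -/
noncomputable def ffHomeo (ax : Axioms c) (enc : M → ℕ) (henc : Function.Injective enc) :
    @Homeomorph (FF c) ↥(SSet c enc) (ffTop c) _ := by
  letI := ffTop c
  exact
  { toFun := fun x => ⟨Phi c enc x, Phi_mem enc x⟩
    invFun := fun s => ⟨memF s.1.1, full_memF s.2⟩
    left_inv := fun x => Subtype.ext (memF_Phi enc x)
    right_inv := fun s => by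
      apply Subtype.ext
      obtain ⟨⟨f, g, h, k⟩, hs⟩ := s
      have hx : FullFilter c (memF f) := full_memF hs
      show Phi c enc ⟨memF f, hx⟩ = (f, g, h, k)
      have hFF : (⟨memF f, hx⟩ : FF c).1 = memF f := rfl
      refine Prod.ext ?_ (Prod.ext ?_ (Prod.ext ?_ ?_))
      · funext A
        show decide (A ∈ memF f) = f A
        by_cases hb : f A = true
        · simp [memF, hb]
        · simp only [Bool.not_eq_true] at hb
          simp [memF, hb]
      · funext p
        exact wcond_unique (gate_d enc ⟨memF f, hx⟩ p) (hs.2.1 p)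
      · funext U
        exact wcond_unique (gate_l enc ⟨memF f, hx⟩ U) (hs.2.2.1 U)
      · funext U
        exact wcond_unique (gate_r enc ⟨memF f, hx⟩ U) (hs.2.2.2 U)
    continuous_toFun := by
      apply Continuous.subtype_mk
      refine Continuous.prodMk ?_ (Continuous.prodMk ?_ (Continuous.prodMk ?_ ?_))
      · refine continuous_pi fun A => continuous_discrete_rng.mpr fun b => ?_
        cases b
        · have : (fun x : FF c => decide (A ∈ x.1)) ⁻¹' {false} = (hat c A)ᶜ := by
            ext x; simp [hat]
          rw [this]; exact isOpen_hat_compl ax A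
        · have : (fun x : FF c => decide (A ∈ x.1)) ⁻¹' {true} = hat c A := by
            ext x; simp [hat]
          rw [this]; exact isOpen_hat c A
      · refine continuous_pi fun p => continuous_discrete_rng.mpr fun n => ?_
        have hg : ∀ x : FF c, x ∈ hat c p.1 ∩ hat c p.2 ↔
            ∃ n, WS enc (fun C => cle c C p.1 ∧ cle c C p.2) n x.1 :=
          fun x => gate_d enc x p
        have hco : IsOpen ((hat c p.1 ∩ hat c p.2)ᶜ) := by
          rw [Set.compl_inter]
          exact IsOpen.union (isOpen_hat_compl ax p.1) (isOpen_hat_compl ax p.2)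
        exact isOpen_wfind ax henc _ hg
          (IsOpen.inter (isOpen_hat c p.1) (isOpen_hat c p.2)) hco n
      · refine continuous_pi fun U => continuous_discrete_rng.mpr fun n => ?_
        exact isOpen_wfind ax henc _ (fun x : FF c => gate_l enc x U)
          (isOpen_const) (isOpen_const (p := ¬ IsSub c U)) n
      · refine continuous_pi fun U => continuous_discrete_rng.mpr fun n => ?_
        exact isOpen_wfind ax henc _ (fun x : FF c => gate_r enc x U)
          (isOpen_const) (isOpen_const (p := ¬ IsSub c U)) n
    continuous_invFun := by
      apply continuous_generateFrom_iff.mpr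
      rintro t ⟨A, rfl⟩
      have heq : (fun s : ↥(SSet c enc) => (⟨memF s.1.1, full_memF s.2⟩ : FF c)) ⁻¹'
          {x : FF c | A ∈ x.1} = (fun s : ↥(SSet c enc) => s.1.1 A) ⁻¹' {true} := by
        ext s; simp [memF]
      rw [heq]
      exact ((continuous_apply A).comp (continuous_fst.comp continuous_subtype_val)).isOpen_preimage
        _ (isOpen_discrete _) }

theorem polish_FF [Countable M] (ax : Axioms c) : @PolishSpace (FF c) (ffTop c) := by
  obtain ⟨enc, henc⟩ := Countable.exists_injective_nat M
  letI := ffTop c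
  haveI : PolishSpace (M → ℕ) := inferInstance
  haveI : PolishSpace (M → Bool) := by
    have : IsCompletelyMetrizableSpace (M → Bool) := inferInstance
    exact inferInstance
  haveI : PolishSpace (M × M → ℕ) := inferInstance
  haveI : PolishSpace (XS M) := inferInstance
  haveI : PolishSpace ↥(SSet c enc) := (isClosed_SSet (c := c) henc).polishSpace
  exact (ffHomeo ax enc henc).isClosedEmbedding.polishSpace

end Polish2
section Main

open TopologicalSpace Topology

variable {c : CG M}

theorem continuous_fmul (ax : Axioms c) (nax : NegAx c) :
    @Continuous (FF c × FF c) (FF c)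
      (@instTopologicalSpaceProd _ _ (ffTop c) (ffTop c)) (ffTop c)
      (fun p => ⟨fprod c p.1.1 p.2.1, full_fprod ax nax p.1.2 p.2.2⟩) := by
  letI := ffTop c
  apply continuous_generateFrom_iff.mpr
  rintro t ⟨A, rfl⟩
  have heq : (fun p : FF c × FF c =>
      (⟨fprod c p.1.1 p.2.1, full_fprod ax nax p.1.2 p.2.2⟩ : FF c)) ⁻¹'
        {x : FF c | A ∈ x.1} =
      ⋃ P, ⋃ Q, ⋃ _ : c.rel P Q A, (hat c P) ×ˢ (hat c Q) := by
    ext p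
    simp only [Set.mem_preimage, Set.mem_setOf_eq, Set.mem_iUnion, Set.mem_prod]
    constructor
    · rintro ⟨P, hP, Q, hQ, hrel⟩; exact ⟨P, Q, hrel, hP, hQ⟩
    · rintro ⟨P, Q, hrel, hP, hQ⟩; exact ⟨P, hP, Q, hQ, hrel⟩
  rw [heq]
  exact isOpen_iUnion fun P => isOpen_iUnion fun Q => isOpen_iUnion fun _ =>
    (isOpen_hat c P).prod (isOpen_hat c Q)

theorem continuous_finv (ax : Axioms c) :
    @Continuous (FF c) (FF c) (ffTop c) (ffTop c)
      (fun x => ⟨finv c x.1, full_finv ax x.2⟩) := by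
  letI := ffTop c
  apply continuous_generateFrom_iff.mpr
  rintro t ⟨A, rfl⟩
  have heq : (fun x : FF c => (⟨finv c x.1, full_finv ax x.2⟩ : FF c)) ⁻¹'
      {x : FF c | A ∈ x.1} = ⋃ B, ⋃ _ : Srel c B A, hat c B := by
    ext x
    simp only [Set.mem_preimage, Set.mem_setOf_eq, Set.mem_iUnion]
    constructor
    · rintro ⟨B, hB, hS⟩; exact ⟨B, hS, hB⟩
    · rintro ⟨B, hS, hB⟩; exact ⟨B, hB, hS⟩
  rw [heq]
  exact isOpen_iUnion fun B => isOpen_iUnion fun _ => isOpen_hat c B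

end Main
/-- `F(M)` with the filter product, inverse, identity and the topology generated
by the sets `Â` is a Polish group. -/
theorem stmt8 (c : CG M) [Countable M] (ax : Axioms c) (nax : NegAx c) (hassoc : FAssoc c) :
    ∃ (mul : FF c → FF c → FF c) (inv : FF c → FF c) (one : FF c),
      (∀ x y, (mul x y).1 = fprod c x.1 y.1) ∧
      (∀ x, (inv x).1 = finv c x.1) ∧
      one.1 = fone c ∧
      (∀ x y z, mul (mul x y) z = mul x (mul y z)) ∧
      (∀ x, mul one x = x) ∧ (∀ x, mul x one = x) ∧
      (∀ x, mul (inv x) x = one) ∧ (∀ x, mul x (inv x) = one) ∧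
      (letI := ffTop c
       Continuous (fun p : FF c × FF c => mul p.1 p.2) ∧ Continuous inv ∧
         PolishSpace (FF c)) := by
  refine ⟨fun x y => ⟨fprod c x.1 y.1, full_fprod ax nax x.2 y.2⟩,
    fun x => ⟨finv c x.1, full_finv ax x.2⟩,
    ⟨fone c, full_fone ax⟩,
    fun x y => rfl, fun x => rfl, rfl,
    fun x y z => Subtype.ext (hassoc x.1 y.1 z.1 x.2 y.2 z.2),
    fun x => Subtype.ext (fone_fprod ax x.2),
    fun x => Subtype.ext (fprod_fone ax x.2),
    fun x => Subtype.ext (finv_fprod ax nax x.2),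
    fun x => Subtype.ext (fprod_finv ax nax x.2),
    continuous_fmul ax nax, continuous_finv ax, polish_FF ax⟩

end CoarsePaper
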